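/- Let Ω and Γ be finite nonempty types and let π be an observed distribution on Ω × Ω that is a perfect channel, i.e., π(x,z) = 0 whenever x ≠ z. Then for every S ⊆ Ω × Γ, the set Q_S = { φ(μ,ν) : μ ∈ Σ_S, ν ∈ N_S } is a convex polytope: there exists a finite set F of conditional distributions of Ω given Ω such that Q_S is the convex hull of F. -/
import Mathlib


open Finset

/-- A joint distribution on `Ω × Γ`. -/
def IsJoint {Ω Γ : Type*} [Fintype Ω] [Fintype Γ] (μ : Ω × Γ → ℝ) : Prop :=
  (∀ p, 0 ≤ μ p) ∧ ∑ p : Ω × Γ, μ p = 1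

/-- Marginal on the first coordinate. -/
noncomputable def margX {Ω Γ : Type*} [Fintype Γ] (μ : Ω × Γ → ℝ) (x : Ω) : ℝ :=
  ∑ u : Γ, μ (x, u)

/-- Marginal on the second coordinate. -/
noncomputable def margU {Ω Γ : Type*} [Fintype Ω] (μ : Ω × Γ → ℝ) (u : Γ) : ℝ :=
  ∑ x : Ω, μ (x, u)

/-- A conditional distribution of `Ω` given `Ω × Γ`, written `ν (z, x, u)`. -/
def IsCondXU {Ω Γ : Type*} [Fintype Ω] (ν : Ω × Ω × Γ → ℝ) : Prop :=
  (∀ p, 0 ≤ ν p) ∧ ∀ x : Ω, ∀ u : Γ, ∑ z : Ω, ν (z, x, u) = 1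

/-- A conditional distribution of `Ω` given `Ω`, written `ζ (z, x)`. -/
def IsCondX {Ω : Type*} [Fintype Ω] (ζ : Ω × Ω → ℝ) : Prop :=
  (∀ p, 0 ≤ ζ p) ∧ ∀ x : Ω, ∑ z : Ω, ζ (z, x) = 1

/-- The pair `(μ, ν)` is compatible with the observed distribution `π`. -/
def Compatible {Ω Γ : Type*} [Fintype Γ] (π : Ω × Ω → ℝ) (μ : Ω × Γ → ℝ)
    (ν : Ω × Ω × Γ → ℝ) : Prop :=
  ∀ x z : Ω, π (x, z) = ∑ u : Γ, μ (x, u) * ν (z, x, u)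

/-- The interventional distribution `φ(μ, ν)`, as a function `(z, x) ↦ ζ(z, x)`. -/
noncomputable def intervention {Ω Γ : Type*} [Fintype Ω] [Fintype Γ]
    (μ : Ω × Γ → ℝ) (ν : Ω × Ω × Γ → ℝ) : Ω × Ω → ℝ :=
  fun p => ∑ u : Γ, margU μ u * ν (p.1, p.2, u)

/-- `I_π`: the set of interventional distributions of pairs compatible with `π`. -/
def Ipi {Ω : Type*} (Γ : Type*) [Fintype Ω] [Fintype Γ]
    (π : Ω × Ω → ℝ) : Set (Ω × Ω → ℝ) :=
  {ζ | ∃ μ : Ω × Γ → ℝ, ∃ ν : Ω × Ω × Γ → ℝ,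
    IsJoint μ ∧ IsCondXU ν ∧ Compatible π μ ν ∧ ζ = intervention μ ν}

/-- `Σ_S`: joint distributions with marginal `π_X` supported inside `S`. -/
def SigmaS {Ω Γ : Type*} [Fintype Ω] [Fintype Γ] (π : Ω × Ω → ℝ)
    (S : Set (Ω × Γ)) : Set (Ω × Γ → ℝ) :=
  {μ | IsJoint μ ∧ (∀ x, margX μ x = margX π x) ∧ ∀ p, 0 < μ p → p ∈ S}

/-- `N_S`: conditional distributions which are deterministic (`Z = X`) on `S`. -/
def NS {Ω Γ : Type*} [Fintype Ω] [DecidableEq Ω] (S : Set (Ω × Γ)) :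
    Set (Ω × Ω × Γ → ℝ) :=
  {ν | IsCondXU ν ∧ ∀ x u, (x, u) ∈ S → ∀ z, ν (z, x, u) = if z = x then 1 else 0}

/-- `Q_S = φ(Σ_S, N_S)`. -/
def QS {Ω Γ : Type*} [Fintype Ω] [Fintype Γ] [DecidableEq Ω] (π : Ω × Ω → ℝ)
    (S : Set (Ω × Γ)) : Set (Ω × Ω → ℝ) :=
  {ζ | ∃ μ ∈ SigmaS π S, ∃ ν ∈ NS S, ζ = intervention μ ν}

lemma prod_expand {ι κ : Type*} [Fintype ι] [Fintype κ] [DecidableEq ι]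
    (q : κ → ι → ℝ) (hq : ∀ i, ∑ k, q k i = 1) (i₀ : ι) (f : κ → ℝ) :
    ∑ g : ι → κ, (∏ i, q (g i) i) * f (g i₀) = ∑ k, q k i₀ * f k := by
  classical
  set Q : ι → κ → ℝ := fun i k => if i = i₀ then q k i * f k else q k i with hQ
  have key : ∀ g : ι → κ, (∏ i, q (g i) i) * f (g i₀) = ∏ i, Q i (g i) := by
    intro g
    rw [← Finset.mul_prod_erase univ (fun i => Q i (g i)) (mem_univ i₀),
        ← Finset.mul_prod_erase univ (fun i => q (g i) i) (mem_univ i₀)]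
    rw [Finset.prod_congr rfl (fun i hi => show Q i (g i) = q (g i) i from if_neg (Finset.ne_of_mem_erase hi))]
    simp only [hQ, if_pos rfl]
    ring
  rw [Finset.sum_congr rfl (fun g _ => key g)]
  have := (Finset.prod_univ_sum (fun _ : ι => (univ : Finset κ)) (fun i k => Q i k)).symm
  rw [Fintype.piFinset_univ] at this
  rw [this]
  rw [← Finset.mul_prod_erase univ (fun i => ∑ k, Q i k) (mem_univ i₀)]
  have h1 : ∀ i ∈ univ.erase i₀, (∑ k, Q i k) = 1 := by
    intro i hi
    rw [Finset.sum_congr rfl (fun k _ => show Q i k = q k i from if_neg (Finset.ne_of_mem_erase hi))]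
    exact hq i
  rw [Finset.prod_congr rfl h1, Finset.prod_const_one, mul_one]
  simp only [hQ, if_pos rfl]

lemma prod_expand_one {ι κ : Type*} [Fintype ι] [Fintype κ] [DecidableEq ι] [Nonempty ι]
    (q : κ → ι → ℝ) (hq : ∀ i, ∑ k, q k i = 1) :
    ∑ g : ι → κ, (∏ i, q (g i) i) = 1 := by
  obtain ⟨i₀⟩ := ‹Nonempty ι›
  have := prod_expand q hq i₀ (fun _ => 1)
  simp only [mul_one] at this
  rw [this, hq i₀]

lemma margU_nonneg {Ω Γ : Type*} [Fintype Ω] [Fintype Γ] {μ : Ω × Γ → ℝ}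
    (hμ : ∀ p, 0 ≤ μ p) (u : Γ) : 0 ≤ margU μ u :=
  Finset.sum_nonneg fun _ _ => hμ _

lemma sum_margU {Ω Γ : Type*} [Fintype Ω] [Fintype Γ] (μ : Ω × Γ → ℝ) :
    ∑ u : Γ, margU μ u = ∑ p : Ω × Γ, μ p := by
  rw [Fintype.sum_prod_type, Finset.sum_comm]
  rfl

lemma intervention_isCondX {Ω Γ : Type*} [Fintype Ω] [Fintype Γ]
    {μ : Ω × Γ → ℝ} {ν : Ω × Ω × Γ → ℝ} (hμ : IsJoint μ) (hν : IsCondXU ν) :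
    IsCondX (intervention μ ν) := by
  constructor
  · intro p
    exact Finset.sum_nonneg fun u _ => mul_nonneg (margU_nonneg hμ.1 u) (hν.1 _)
  · intro x
    have h : ∀ z : Ω, intervention μ ν (z, x) = ∑ u : Γ, margU μ u * ν (z, x, u) := fun _ => rfl
    simp only [h]
    rw [Finset.sum_comm]
    calc ∑ u : Γ, ∑ z : Ω, margU μ u * ν (z, x, u)
        = ∑ u : Γ, margU μ u * ∑ z : Ω, ν (z, x, u) := by
          simp [Finset.mul_sum]
      _ = ∑ u : Γ, margU μ u := by simp [hν.2 x]
      _ = 1 := by rw [sum_margU, hμ.2]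

/-- For a perfect channel `π`, each `Q_S` is a convex polytope: the convex hull of a
finite set of conditional distributions of `Ω` given `Ω`. -/
theorem stmt_5 {Ω Γ : Type*} [Fintype Ω] [Fintype Γ] [DecidableEq Ω]
    [Nonempty Ω] [Nonempty Γ]
    (π : Ω × Ω → ℝ) (hπ : IsJoint π) (hperf : ∀ x z : Ω, x ≠ z → π (x, z) = 0) :
    ∀ S : Set (Ω × Γ), ∃ F : Set (Ω × Ω → ℝ), F.Finite ∧ (∀ ζ ∈ F, IsCondX ζ) ∧
      QS π S = convexHull ℝ F := by
  classical
  intro S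
  obtain ⟨u₀⟩ := ‹Nonempty Γ›
  have hpX0 : ∀ x, 0 ≤ margX π x := fun x => Finset.sum_nonneg fun _ _ => hπ.1 _
  have hpXsum : ∑ x : Ω, margX π x = 1 := by
    rw [show (∑ x : Ω, margX π x) = ∑ p : Ω × Ω, π p by
      rw [Fintype.sum_prod_type]; rfl]
    exact hπ.2
  set dJ : (Ω → Γ) → Ω × Γ → ℝ :=
    fun h p => if p.2 = h p.1 then margX π p.1 else 0 with hdJ
  set dC : (Ω × Γ → Ω) → Ω × Ω × Γ → ℝ :=
    fun g q => if q.1 = g (q.2.1, q.2.2) then 1 else 0 with hdC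
  set Good : Set ((Ω → Γ) × (Ω × Γ → Ω)) :=
    {hg | (∀ x, 0 < margX π x → (x, hg.1 x) ∈ S) ∧ (∀ p ∈ S, hg.2 p = p.1)} with hGood
  have hdJ_mem : ∀ hg ∈ Good, dJ hg.1 ∈ SigmaS π S := by
    intro hg hgG
    refine ⟨⟨fun p => ?_, ?_⟩, fun x => ?_, fun p hp => ?_⟩
    · simp only [hdJ]
      split
      · exact hpX0 _
      · exact le_rfl
    · rw [Fintype.sum_prod_type]
      simp only [hdJ]
      rw [Finset.sum_congr rfl (fun x _ => Finset.sum_ite_eq' univ (hg.1 x) (fun _ => margX π x))]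
      simpa using hpXsum
    · simp only [margX, hdJ]
      simpa using Finset.sum_ite_eq' univ (hg.1 x) (fun _ => margX π x)
    · simp only [hdJ] at hp
      by_cases hc : p.2 = hg.1 p.1
      · rw [if_pos hc] at hp
        have := hgG.1 p.1 hp
        rwa [show (p.1, hg.1 p.1) = p by rw [← hc]] at this
      · rw [if_neg hc] at hp
        exact absurd hp (lt_irrefl 0)
  have hdC_mem : ∀ hg ∈ Good, dC hg.2 ∈ NS S := by
    intro hg hgG
    refine ⟨⟨fun q => ?_, fun x u => ?_⟩, fun x u hS z => ?_⟩
    · simp only [hdC]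
      split
      · exact zero_le_one
      · exact le_rfl
    · simp only [hdC]
      simpa using Finset.sum_ite_eq' univ (hg.2 (x, u)) (fun _ => (1:ℝ))
    · simp only [hdC, hgG.2 (x, u) hS]
  refine ⟨(fun hg : (Ω → Γ) × (Ω × Γ → Ω) => intervention (dJ hg.1) (dC hg.2)) '' Good,
    Set.Finite.image _ (Set.toFinite _), ?_, ?_⟩
  · rintro ζ ⟨hg, hgG, rfl⟩
    exact intervention_isCondX (hdJ_mem hg hgG).1 (hdC_mem hg hgG).1
  apply Set.Subset.antisymm
  · -- QS ⊆ convexHull F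
    rintro ζ ⟨μ, ⟨⟨hμ0, hμ1⟩, hμm, hμS⟩, ν, ⟨⟨hν0, hν1⟩, hνS⟩, rfl⟩
    set r : Γ → Ω → ℝ :=
      fun u x => if 0 < margX π x then μ (x, u) / margX π x else if u = u₀ then 1 else 0 with hr
    have hr0 : ∀ u x, 0 ≤ r u x := by
      intro u x
      simp only [hr]
      split
      · exact div_nonneg (hμ0 _) (hpX0 x)
      · split
        · exact zero_le_one
        · exact le_rfl
    have hr1 : ∀ x, ∑ u, r u x = 1 := by
      intro x
      by_cases hx : 0 < margX π x
      · simp only [hr, if_pos hx]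
        rw [← Finset.sum_div]
        rw [show (∑ u : Γ, μ (x, u)) = margX μ x from rfl, hμm x]
        exact div_self (ne_of_gt hx)
      · simp only [hr, if_neg hx]
        simpa using Finset.sum_ite_eq' univ u₀ (fun _ => (1:ℝ))
    have hrμ : ∀ x u, margX π x * r u x = μ (x, u) := by
      intro x u
      by_cases hx : 0 < margX π x
      · simp only [hr, if_pos hx]
        rw [mul_comm, div_mul_cancel₀ _ (ne_of_gt hx)]
      · have hx0 : margX π x = 0 := le_antisymm (not_lt.mp hx) (hpX0 x)
        have hμx0 : μ (x, u) = 0 := by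
          have hs : margX μ x = 0 := by rw [hμm x, hx0]
          have := (Finset.sum_eq_zero_iff_of_nonneg (fun u _ => hμ0 (x, u))).mp hs
          exact this u (mem_univ u)
        rw [hx0, hμx0, zero_mul]
    set q : Ω → Ω × Γ → ℝ := fun k p => ν (k, p.1, p.2) with hqdef
    have hq1 : ∀ p : Ω × Γ, ∑ k, q k p = 1 := fun p => hν1 p.1 p.2
    set w : (Ω → Γ) × (Ω × Γ → Ω) → ℝ :=
      fun hg => (∏ x, r (hg.1 x) x) * (∏ p, q (hg.2 p) p) with hwdef
    have hw0 : ∀ hg, 0 ≤ w hg := by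
      intro hg
      exact mul_nonneg (Finset.prod_nonneg fun x _ => hr0 _ _)
        (Finset.prod_nonneg fun p _ => hν0 _)
    have hwzero : ∀ hg, hg ∉ Good → w hg = 0 := by
      intro hg hbad
      rw [hGood] at hbad
      simp only [Set.mem_setOf_eq, not_and_or, not_forall] at hbad
      rcases hbad with ⟨x, hx, hxS⟩ | ⟨p, hpS, hgp⟩
      · have hz : r (hg.1 x) x = 0 := by
          have hμ0' : μ (x, hg.1 x) = 0 := by
            by_contra hne
            have : 0 < μ (x, hg.1 x) := lt_of_le_of_ne (hμ0 _) (Ne.symm hne)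
            exact hxS (hμS _ this)
          simp only [hr, if_pos hx, hμ0', zero_div]
        show (∏ x, r (hg.1 x) x) * (∏ p, q (hg.2 p) p) = 0
        exact mul_eq_zero_of_left (Finset.prod_eq_zero (f := fun x => r (hg.1 x) x) (mem_univ x) hz) _
      · have hz : q (hg.2 p) p = 0 := by
          have := hνS p.1 p.2 (by rwa [show ((p.1 : Ω), (p.2 : Γ)) = p from rfl]) (hg.2 p)
          simp only [hqdef, this, if_neg hgp]
        show (∏ x, r (hg.1 x) x) * (∏ p', q (hg.2 p') p') = 0
        exact mul_eq_zero_of_right _ (Finset.prod_eq_zero (f := fun p' => q (hg.2 p') p') (mem_univ p) hz)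
    set P : (Ω → Γ) × (Ω × Γ → Ω) → Ω × Ω → ℝ :=
      fun hg => intervention (dJ hg.1) (dC hg.2) with hPdef
    set GF : Finset ((Ω → Γ) × (Ω × Γ → Ω)) := univ.filter (fun hg => hg ∈ Good) with hGF
    have hwsum : ∑ hg ∈ GF, w hg = 1 := by
      rw [Finset.sum_subset (Finset.subset_univ GF)
        (fun hg _ hn => hwzero hg (by simpa [hGF] using hn))]
      rw [Fintype.sum_prod_type]
      simp only [hwdef]
      rw [← Finset.sum_mul_sum]
      rw [prod_expand_one r hr1, prod_expand_one q hq1, mul_one]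
    have hmain : intervention μ ν = ∑ hg ∈ GF, w hg • P hg := by
      rw [Finset.sum_subset (Finset.subset_univ GF)
        (fun hg _ hn => by rw [hwzero hg (by simpa [hGF] using hn), zero_smul])]
      funext p
      rw [Finset.sum_apply]
      symm
      have hPval : ∀ hg : (Ω → Γ) × (Ω × Γ → Ω),
          P hg p = ∑ x' : Ω, margX π x' * (if p.1 = hg.2 (p.2, hg.1 x') then 1 else 0) := by
        intro hg
        have : P hg p = ∑ u : Γ, (∑ x' : Ω, if u = hg.1 x' then margX π x' else 0) *
            (if p.1 = hg.2 (p.2, u) then 1 else 0) := by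
          simp only [hPdef, intervention, margU, hdJ, hdC]
        rw [this]
        rw [Finset.sum_congr rfl (fun u _ => Finset.sum_mul _ _ _)]
        rw [Finset.sum_comm]
        apply Finset.sum_congr rfl
        intro x' _
        rw [Finset.sum_congr rfl (fun u _ => ite_mul _ _ _ _)]
        simp only [zero_mul]
        simpa using Finset.sum_ite_eq' univ (hg.1 x')
          (fun u => margX π x' * (if p.1 = hg.2 (p.2, u) then 1 else 0))
      simp only [Pi.smul_apply, smul_eq_mul]
      rw [Finset.sum_congr rfl (fun hg _ => by rw [hPval hg])]
      rw [Fintype.sum_prod_type]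
      have step_g : ∀ h : Ω → Γ,
          (∑ g : Ω × Γ → Ω, ((∏ x, r (h x) x) * ∏ p', q (g p') p') *
            ∑ x' : Ω, margX π x' * (if p.1 = g (p.2, h x') then 1 else 0))
          = (∏ x, r (h x) x) * ∑ x' : Ω, margX π x' * ν (p.1, p.2, h x') := by
        intro h
        have inner : ∀ x' : Ω,
            (∑ g : Ω × Γ → Ω, (∏ p', q (g p') p') * (if p.1 = g (p.2, h x') then 1 else 0))
              = ν (p.1, p.2, h x') := by
          intro x'
          rw [prod_expand q hq1 (p.2, h x') (fun k => if p.1 = k then 1 else 0)]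
          simp [hqdef]
        calc (∑ g : Ω × Γ → Ω, ((∏ x, r (h x) x) * ∏ p', q (g p') p') *
                ∑ x' : Ω, margX π x' * (if p.1 = g (p.2, h x') then 1 else 0))
            = ∑ g : Ω × Γ → Ω, ∑ x' : Ω, margX π x' * ((∏ x, r (h x) x) *
                ((∏ p', q (g p') p') * (if p.1 = g (p.2, h x') then 1 else 0))) := by
              apply Finset.sum_congr rfl
              intro g _
              rw [Finset.mul_sum]
              apply Finset.sum_congr rfl
              intro x' _
              ring
          _ = ∑ x' : Ω, ∑ g : Ω × Γ → Ω, margX π x' * ((∏ x, r (h x) x) *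
                ((∏ p', q (g p') p') * (if p.1 = g (p.2, h x') then 1 else 0))) :=
              Finset.sum_comm
          _ = ∑ x' : Ω, margX π x' * ((∏ x, r (h x) x) *
                ∑ g : Ω × Γ → Ω, (∏ p', q (g p') p') *
                  (if p.1 = g (p.2, h x') then 1 else 0)) := by
              apply Finset.sum_congr rfl
              intro x' _
              rw [Finset.mul_sum, Finset.mul_sum]
          _ = (∏ x, r (h x) x) * ∑ x' : Ω, margX π x' * ν (p.1, p.2, h x') := by
              rw [Finset.mul_sum]
              apply Finset.sum_congr rfl
              intro x' _
              rw [inner x']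
              ring
      rw [Finset.sum_congr rfl (fun h _ => step_g h)]
      have step_h :
          ∑ h : Ω → Γ, (∏ x, r (h x) x) * ∑ x' : Ω, margX π x' * ν (p.1, p.2, h x')
          = ∑ x' : Ω, margX π x' * ∑ u : Γ, r u x' * ν (p.1, p.2, u) := by
        calc ∑ h : Ω → Γ, (∏ x, r (h x) x) * ∑ x' : Ω, margX π x' * ν (p.1, p.2, h x')
            = ∑ h : Ω → Γ, ∑ x' : Ω,
                margX π x' * ((∏ x, r (h x) x) * ν (p.1, p.2, h x')) := by
              apply Finset.sum_congr rfl
              intro h _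
              rw [Finset.mul_sum]
              apply Finset.sum_congr rfl
              intro x' _
              ring
          _ = ∑ x' : Ω, ∑ h : Ω → Γ,
                margX π x' * ((∏ x, r (h x) x) * ν (p.1, p.2, h x')) := Finset.sum_comm
          _ = ∑ x' : Ω, margX π x' *
              ∑ h : Ω → Γ, (∏ x, r (h x) x) * ν (p.1, p.2, h x') := by
              apply Finset.sum_congr rfl
              intro x' _
              rw [Finset.mul_sum]
          _ = ∑ x' : Ω, margX π x' * ∑ u : Γ, r u x' * ν (p.1, p.2, u) := by
              apply Finset.sum_congr rfl
              intro x' _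
              congr 1
              exact prod_expand r hr1 x' (fun u => ν (p.1, p.2, u))
      rw [step_h]
      calc ∑ x' : Ω, margX π x' * ∑ u : Γ, r u x' * ν (p.1, p.2, u)
          = ∑ x' : Ω, ∑ u : Γ, μ (x', u) * ν (p.1, p.2, u) := by
            apply Finset.sum_congr rfl
            intro x' _
            rw [Finset.mul_sum]
            apply Finset.sum_congr rfl
            intro u _
            rw [← mul_assoc, hrμ x' u]
        _ = ∑ u : Γ, margU μ u * ν (p.1, p.2, u) := by
            rw [Finset.sum_comm]
            apply Finset.sum_congr rfl
            intro u _
            rw [margU, Finset.sum_mul]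
        _ = intervention μ ν p := rfl
    rw [hmain]
    have hcm := Finset.centerMass_mem_convexHull (t := GF) (w := w) (z := P)
      (fun i _ => hw0 i) (by rw [hwsum]; norm_num)
      (fun i hi => Set.mem_image_of_mem _ (by simpa [hGF] using hi))
    rwa [Finset.centerMass_eq_of_sum_1 _ _ hwsum] at hcm
  · apply convexHull_min
    · rintro ζ ⟨hg, hgG, rfl⟩
      exact ⟨dJ hg.1, hdJ_mem hg hgG, dC hg.2, hdC_mem hg hgG, rfl⟩
    · -- QS is convex
      rintro ζ₁ ⟨μ₁, ⟨⟨hμ₁0, hμ₁1⟩, hμ₁m, hμ₁S⟩, ν₁, ⟨⟨hν₁0, hν₁1⟩, hν₁S⟩, rfl⟩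
        ζ₂ ⟨μ₂, ⟨⟨hμ₂0, hμ₂1⟩, hμ₂m, hμ₂S⟩, ν₂, ⟨⟨hν₂0, hν₂1⟩, hν₂S⟩, rfl⟩ a b ha hb hab
      set μ' : Ω × Γ → ℝ := fun p => a * μ₁ p + b * μ₂ p with hμ'def
      have hmarg : ∀ u, margU μ' u = a * margU μ₁ u + b * margU μ₂ u := by
        intro u
        simp [margU, hμ'def, Finset.sum_add_distrib, Finset.mul_sum]
      have hm0 : ∀ u, ¬ 0 < margU μ' u →
          a * margU μ₁ u = 0 ∧ b * margU μ₂ u = 0 := by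
        intro u hu
        have h1 : 0 ≤ a * margU μ₁ u := mul_nonneg ha (margU_nonneg hμ₁0 u)
        have h2 : 0 ≤ b * margU μ₂ u := mul_nonneg hb (margU_nonneg hμ₂0 u)
        have hμ'0 : ∀ p, 0 ≤ μ' p :=
          fun p => add_nonneg (mul_nonneg ha (hμ₁0 p)) (mul_nonneg hb (hμ₂0 p))
        have : a * margU μ₁ u + b * margU μ₂ u = 0 := by
          rw [← hmarg]
          exact le_antisymm (not_lt.mp hu) (margU_nonneg hμ'0 u)
        constructor
        · linarith
        · linarith
      have hμ'0 : ∀ p, 0 ≤ μ' p :=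
        fun p => add_nonneg (mul_nonneg ha (hμ₁0 p)) (mul_nonneg hb (hμ₂0 p))
      set ν' : Ω × Ω × Γ → ℝ := fun t =>
        if 0 < margU μ' t.2.2 then
          (a * margU μ₁ t.2.2 * ν₁ t + b * margU μ₂ t.2.2 * ν₂ t) / margU μ' t.2.2
        else if t.1 = t.2.1 then 1 else 0 with hν'def
      refine ⟨μ', ⟨⟨hμ'0, ?_⟩, ?_, ?_⟩, ν', ⟨⟨?_, ?_⟩, ?_⟩, ?_⟩
      · -- sums to one
        simp only [hμ'def]
        rw [Finset.sum_add_distrib, ← Finset.mul_sum, ← Finset.mul_sum, hμ₁1, hμ₂1]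
        simpa using hab
      · -- marginal
        intro x
        have : margX μ' x = a * margX μ₁ x + b * margX μ₂ x := by
          simp [margX, hμ'def, Finset.sum_add_distrib, Finset.mul_sum]
        rw [this, hμ₁m x, hμ₂m x, ← add_mul, hab, one_mul]
      · -- support
        intro p hp
        by_cases h1 : 0 < μ₁ p
        · exact hμ₁S p h1
        by_cases h2 : 0 < μ₂ p
        · exact hμ₂S p h2
        exfalso
        have e1 : μ₁ p = 0 := le_antisymm (not_lt.mp h1) (hμ₁0 p)
        have e2 : μ₂ p = 0 := le_antisymm (not_lt.mp h2) (hμ₂0 p)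
        rw [hμ'def] at hp
        simp [e1, e2] at hp
      · -- ν' nonneg
        intro t
        simp only [hν'def]
        split
        · rename_i hm
          refine div_nonneg (add_nonneg ?_ ?_) (le_of_lt hm)
          · exact mul_nonneg (mul_nonneg ha (margU_nonneg hμ₁0 _)) (hν₁0 t)
          · exact mul_nonneg (mul_nonneg hb (margU_nonneg hμ₂0 _)) (hν₂0 t)
        · split
          · exact zero_le_one
          · exact le_rfl
      · -- ν' rows sum to 1
        intro x u
        by_cases hm : 0 < margU μ' u
        · have : ∀ z : Ω, ν' (z, x, u) =
              (a * margU μ₁ u * ν₁ (z, x, u) + b * margU μ₂ u * ν₂ (z, x, u)) / margU μ' u := by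
            intro z
            simp only [hν'def, if_pos hm]
          simp only [this]
          rw [← Finset.sum_div, Finset.sum_add_distrib, ← Finset.mul_sum, ← Finset.mul_sum,
            hν₁1 x u, hν₂1 x u, mul_one, mul_one, ← hmarg u]
          exact div_self (ne_of_gt hm)
        · have : ∀ z : Ω, ν' (z, x, u) = if z = x then 1 else 0 := by
            intro z
            simp only [hν'def, if_neg hm]
          simp only [this]
          simpa using Finset.sum_ite_eq' univ x (fun _ => (1:ℝ))
      · -- ν' deterministic on S
        intro x u hS z
        by_cases hm : 0 < margU μ' u
        · have e : ν' (z, x, u) =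
              (a * margU μ₁ u * ν₁ (z, x, u) + b * margU μ₂ u * ν₂ (z, x, u)) / margU μ' u := by
            simp only [hν'def, if_pos hm]
          rw [e, hν₁S x u hS z, hν₂S x u hS z]
          rw [show a * margU μ₁ u * (if z = x then (1:ℝ) else 0) +
              b * margU μ₂ u * (if z = x then (1:ℝ) else 0)
              = margU μ' u * (if z = x then (1:ℝ) else 0) by rw [hmarg u]; ring]
          rw [mul_comm, mul_div_assoc, div_self (ne_of_gt hm), mul_one]
        · simp only [hν'def, if_neg hm]
      · -- the convex combination equals the intervention
        funext p
        show a * intervention μ₁ ν₁ p + b * intervention μ₂ ν₂ p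
            = ∑ u : Γ, margU μ' u * ν' (p.1, p.2, u)
        rw [show a * intervention μ₁ ν₁ p = ∑ u : Γ, a * (margU μ₁ u * ν₁ (p.1, p.2, u)) from
          by rw [intervention, Finset.mul_sum]]
        rw [show b * intervention μ₂ ν₂ p = ∑ u : Γ, b * (margU μ₂ u * ν₂ (p.1, p.2, u)) from
          by rw [intervention, Finset.mul_sum]]
        rw [← Finset.sum_add_distrib]
        apply Finset.sum_congr rfl
        intro u _
        by_cases hm : 0 < margU μ' u
        · have e : ν' (p.1, p.2, u) =
              (a * margU μ₁ u * ν₁ (p.1, p.2, u) + b * margU μ₂ u * ν₂ (p.1, p.2, u)) /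
                margU μ' u := by
            simp only [hν'def, if_pos hm]
          rw [e, mul_comm (margU μ' u), div_mul_cancel₀ _ (ne_of_gt hm)]
          ring
        · obtain ⟨e1, e2⟩ := hm0 u hm
          have em : margU μ' u = 0 := by
            rw [hmarg u, e1, e2, add_zero]
          rw [em, zero_mul]
          rw [show a * (margU μ₁ u * ν₁ (p.1, p.2, u)) =
              (a * margU μ₁ u) * ν₁ (p.1, p.2, u) by ring, e1, zero_mul]
          rw [show b * (margU μ₂ u * ν₂ (p.1, p.2, u)) =
              (b * margU μ₂ u) * ν₂ (p.1, p.2, u) by ring, e2, zero_mul, add_zero]
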